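/- Exact level-set characterization under compactness: suppose in addition that X is a topological space, U is a nonempty compact topological space, the map (x, u) ↦ f x u is jointly continuous, and l is continuous. Then for every K : ℕ, V_K x ≥ 0 implies there exists a control sequence u : ℕ → U with l (traj x u k) ≥ 0 for all k ≤ K; consequently the super-zero level set {x | V_K x ≥ 0} equals the K-step viable set. -/
import Mathlib

def traj {X U : Type*} (f : X → U → X) (x : X) (u : ℕ → U) : ℕ → X
  | 0 => x
  | k + 1 => f (traj f x u k) (u k)

noncomputable def safetyVal {X U : Type*} (f : X → U → X) (l : X → ℝ) : ℕ → X → ℝ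
  | 0, x => l x
  | K + 1, x => min (l x) (⨆ u : U, safetyVal f l K (f x u))

section aux
variable {X U : Type*} [TopologicalSpace X] [TopologicalSpace U]
    [Nonempty U] [CompactSpace U]
    (f : X → U → X) (l : X → ℝ)

lemma safetyVal_le {M : ℝ} (hM : ∀ x, l x ≤ M) : ∀ K x, safetyVal f l K x ≤ M := by
  intro K x
  cases K with
  | zero => exact hM x
  | succ K => exact le_trans (min_le_left _ _) (hM x)

lemma safetyVal_bddAbove {M : ℝ} (hM : ∀ x, l x ≤ M) (K : ℕ) (x : X) :
    BddAbove (Set.range fun u : U => safetyVal f l K (f x u)) := by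
  refine ⟨M, ?_⟩
  rintro _ ⟨u, rfl⟩
  exact safetyVal_le f l hM K _

lemma safetyVal_continuous (hf : Continuous fun p : X × U => f p.1 p.2) (hl : Continuous l) :
    ∀ K, Continuous (safetyVal f l K) := by
  intro K
  induction K with
  | zero => exact hl
  | succ K ih =>
      show Continuous fun x => min (l x) (⨆ u : U, safetyVal f l K (f x u))
      refine hl.min ?_
      have : Continuous fun x : X => sSup ((fun u : U => safetyVal f l K (f x u)) '' Set.univ) := by
        apply (isCompact_univ : IsCompact (Set.univ : Set U)).continuous_sSup
        exact ih.comp hf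
      simpa [Set.image_univ, iSup] using this

lemma traj_shift (x : X) (u0 : U) (u : ℕ → U) (k : ℕ) :
    traj f x (fun n => Nat.rec u0 (fun m _ => u m) n) (k + 1) = traj f (f x u0) u k := by
  induction k with
  | zero => rfl
  | succ k ih => show f _ _ = f _ _; rw [ih]

end aux

theorem safetyVal_level_set_eq {X U : Type*} [TopologicalSpace X] [TopologicalSpace U]
    [Nonempty U] [CompactSpace U]
    (f : X → U → X) (l : X → ℝ)
    (hf : Continuous fun p : X × U => f p.1 p.2) (hl : Continuous l)
    (hbdd : ∃ M : ℝ, ∀ x : X, l x ≤ M) (K : ℕ) :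
    (∀ x : X, safetyVal f l K x ≥ 0 → ∃ u : ℕ → U, ∀ k ≤ K, l (traj f x u k) ≥ 0) ∧
    {x : X | safetyVal f l K x ≥ 0} = {x : X | ∃ u : ℕ → U, ∀ k ≤ K, l (traj f x u k) ≥ 0} := by
  obtain ⟨M, hM⟩ := hbdd
  -- forward direction by induction on K
  have fwd : ∀ K x, safetyVal f l K x ≥ 0 → ∃ u : ℕ → U, ∀ k ≤ K, l (traj f x u k) ≥ 0 := by
    intro K
    induction K with
    | zero =>
        intro x hx
        exact ⟨fun _ => Classical.arbitrary U, fun k hk => by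
          interval_cases k; exact hx⟩
    | succ K ih =>
        intro x hx
        have hx1 : l x ≥ 0 := le_trans hx (min_le_left _ _)
        have hx2 : (⨆ u : U, safetyVal f l K (f x u)) ≥ 0 := le_trans hx (min_le_right _ _)
        -- sup attained
        have hcont : Continuous fun u : U => safetyVal f l K (f x u) :=
          (safetyVal_continuous f l hf hl K).comp (hf.comp (Continuous.prodMk_right x))
        obtain ⟨u0, hu0⟩ := hcont.exists_forall_ge (by simp [Filter.cocompact_eq_bot])
        have hsup : (⨆ u : U, safetyVal f l K (f x u)) ≤ safetyVal f l K (f x u0) := by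
          apply ciSup_le
          intro u
          exact hu0 u
        obtain ⟨u, hu⟩ := ih (f x u0) (le_trans hx2 hsup)
        refine ⟨fun n => Nat.rec u0 (fun m _ => u m) n, fun k hk => ?_⟩
        cases k with
        | zero => exact hx1
        | succ k =>
            rw [traj_shift]
            exact hu k (Nat.succ_le_succ_iff.mp hk)
  -- backward direction
  have bwd : ∀ K x (u : ℕ → U), (∀ k ≤ K, l (traj f x u k) ≥ 0) → safetyVal f l K x ≥ 0 := by
    intro K
    induction K with
    | zero => intro x u h; exact h 0 le_rfl
    | succ K ih =>
        intro x u h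
        refine le_min (h 0 (Nat.zero_le _)) ?_
        have h1 : safetyVal f l K (f x (u 0)) ≥ 0 := by
          apply ih (f x (u 0)) (fun n => u (n + 1))
          intro k hk
          have : traj f (f x (u 0)) (fun n => u (n + 1)) k = traj f x u (k + 1) := by
            clear h hk
            induction k with
            | zero => rfl
            | succ k ih2 => show f _ _ = f _ _; rw [ih2]
          rw [this]
          exact h (k + 1) (Nat.succ_le_succ hk)
        exact le_trans h1 (le_ciSup (safetyVal_bddAbove f l hM K x) (u 0))
  refine ⟨fwd K, ?_⟩
  ext x
  exact ⟨fun h => fwd K x h, fun ⟨u, hu⟩ => bwd K x u hu⟩
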